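/- Let F be a field and Γ a commutative additive monoid with bounded decompositions. Let A be a unital associative F-algebra carrying a coassociative counital F-coalgebra structure with comultiplication Δ and counit ε, such that Δ(1) = 1 ⊗ 1. Suppose A is graded by Γ: A = ⊕_{γ∈Γ} A_γ as an internal direct sum of subspaces, with A_0 = F·1, A_α · A_β ⊆ A_{α+β} for all α, β, Δ respecting the grading (Δ(A_γ) ⊆ Σ_{α+β=γ} A_α ⊗ A_β for every γ), and each A_γ finite-dimensional over F. Let β : A × A → F be a compatible pairing such that β(A_γ, A_δ) = 0 whenever γ ≠ δ, and β(x, x) ≠ 0 for every x ≠ 0. Then A is generated as a unital F-algebra by its primitive elements: the subalgebra generated by Prim(A) equals A. -/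

import Mathlib

set_option maxHeartbeats 1000000
set_option synthInstance.maxHeartbeats 200000


open TensorProduct

/-- The subspace of primitive elements of `A`: those `x` with
`Δ(x) = x ⊗ 1 + 1 ⊗ x`. -/
def PrimSubmodule (F A : Type*) [Field F] [Ring A] [Algebra F A]
    [Coalgebra F A] : Submodule F A where
  carrier := {x | Coalgebra.comul x = x ⊗ₜ[F] (1 : A) + (1 : A) ⊗ₜ[F] x}
  add_mem' := by
    intro a b ha hb
    simp only [Set.mem_setOf_eq] at *
    rw [map_add, ha, hb, TensorProduct.add_tmul, TensorProduct.tmul_add]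
    abel
  zero_mem' := by simp
  smul_mem' := by
    intro c a ha
    simp only [Set.mem_setOf_eq] at *
    rw [map_smul, ha, smul_add, TensorProduct.smul_tmul', ← TensorProduct.tmul_smul]

section Aux

variable {F A : Type*} [Field F] [AddCommGroup A] [Module F A]

/-- Orthogonal decomposition relative to an anisotropic (possibly nonsymmetric) bilinear
form on a finite-dimensional subspace. -/
private lemma aux_ortho (β : A →ₗ[F] A →ₗ[F] F) (V D : Submodule F A)
    [FiniteDimensional F V] (hDV : D ≤ V)
    (haniso : ∀ x ∈ V, x ≠ 0 → β x x ≠ 0) :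
    ∀ x ∈ V, ∃ d ∈ D, ∀ e ∈ D, β e (x - d) = 0 := by
  intro x hx
  set D' : Submodule F V := D.comap V.subtype with hD'
  let b : V →ₗ[F] V →ₗ[F] F := β.compl₁₂ V.subtype V.subtype
  let φ : V →ₗ[F] Module.Dual F D' := (b.domRestrict D').flip
  have hinj : Function.Injective (φ ∘ₗ D'.subtype) := by
    rw [← LinearMap.ker_eq_bot, LinearMap.ker_eq_bot']
    intro d hd
    by_contra hne
    have h1 : β (d : V) (d : V) = 0 := by
      have := congrArg (fun f => f d) hd
      simpa [φ, b] using this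
    exact haniso ((d : V) : A) (d : V).2
      (fun h => hne (Subtype.ext (Subtype.ext h))) h1
  have hsurj : Function.Surjective (φ ∘ₗ D'.subtype) :=
    (LinearMap.injective_iff_surjective_of_finrank_eq_finrank
      (Subspace.dual_finrank_eq (K := F) (V := D')).symm).mp hinj
  obtain ⟨δ, hδ⟩ := hsurj (φ ⟨x, hx⟩)
  refine ⟨((δ : V) : A), δ.2, ?_⟩
  intro e he
  have he' : (⟨e, hDV he⟩ : V) ∈ D' := by
    simp [hD', Submodule.mem_comap, he]
  have := congrArg (fun f => f (⟨⟨e, hDV he⟩, he'⟩ : D')) hδ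
  simp only [LinearMap.comp_apply, φ, LinearMap.flip_apply,
    LinearMap.domRestrict_apply, Submodule.coe_subtype] at this
  have hβ : β e ((δ : V) : A) = β e x := by simpa [b] using this
  rw [map_sub, hβ, sub_self]

/-- Nondegeneracy of the induced pairing on the tensor product of two
finite-dimensional subspaces, for an anisotropic form. -/
private lemma aux_tensor_nondeg (β : A →ₗ[F] A →ₗ[F] F) (V W : Submodule F A)
    [FiniteDimensional F V] [FiniteDimensional F W]
    (hV : ∀ x ∈ V, x ≠ 0 → β x x ≠ 0) (hW : ∀ x ∈ W, x ≠ 0 → β x x ≠ 0)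
    (w : A ⊗[F] A) (hw : w ∈ Submodule.map₂ (TensorProduct.mk F A A) V W)
    (hw0 : ∀ a ∈ V, ∀ c ∈ W,
      TensorProduct.lift ((LinearMap.mul F F).compl₁₂ (β a) (β c)) w = 0) :
    w = 0 := by
  have hrange : Submodule.map₂ (TensorProduct.mk F A A) V W
      = LinearMap.range (mapIncl V W) := by
    rw [Submodule.map₂_eq_span_image2, range_mapIncl]
    rw [Submodule.map₂_eq_span_image2]
  rw [hrange] at hw
  obtain ⟨w', rfl⟩ := hw
  let m1 : V →ₗ[F] Module.Dual F V := (β.compl₁₂ V.subtype V.subtype).flip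
  let m2 : W →ₗ[F] Module.Dual F W := (β.compl₁₂ W.subtype W.subtype).flip
  have hm1 : Function.Injective m1 := by
    rw [← LinearMap.ker_eq_bot, LinearMap.ker_eq_bot']
    intro u hu
    by_contra hne
    have h1 : β (u : A) (u : A) = 0 := by
      have := congrArg (fun f => f u) hu
      simpa [m1] using this
    exact hV (u : A) u.2 (fun h => hne (Subtype.ext h)) h1
  have hm2 : Function.Injective m2 := by
    rw [← LinearMap.ker_eq_bot, LinearMap.ker_eq_bot']
    intro u hu
    by_contra hne
    have h1 : β (u : A) (u : A) = 0 := by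
      have := congrArg (fun f => f u) hu
      simpa [m2] using this
    exact hW (u : A) u.2 (fun h => hne (Subtype.ext h)) h1
  have hmap : Function.Injective (TensorProduct.map m1 m2) := by
    rw [← LinearMap.lTensor_comp_rTensor]
    exact (Module.Flat.lTensor_preserves_injective_linearMap m2 hm2).comp
      (Module.Flat.rTensor_preserves_injective_linearMap m1 hm1)
  have hdd : Function.Injective (TensorProduct.dualDistrib F ↥V ↥W) := by
    let bV := Module.Free.chooseBasis F ↥V
    let bW := Module.Free.chooseBasis F ↥W
    have h := TensorProduct.dualDistrib_dualDistribInvOfBasis_right_inverse bV bW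
    intro s t hst
    have hs := LinearMap.congr_fun h s
    have ht := LinearMap.congr_fun h t
    simp only [LinearMap.comp_apply, LinearMap.id_apply] at hs ht
    rw [← hs, ← ht, hst]
  have key : ∀ (u : V) (v : W) (t : ↥V ⊗[F] ↥W),
      TensorProduct.dualDistrib F ↥V ↥W (TensorProduct.map m1 m2 t) ((u : ↥V) ⊗ₜ[F] (v : ↥W))
        = TensorProduct.lift ((LinearMap.mul F F).compl₁₂ (β (u : A)) (β (v : A)))
            (mapIncl V W t) := by
    intro u v t
    induction t using TensorProduct.induction_on with
    | zero => simp
    | tmul p q =>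
      simp [m1, m2, mapIncl, TensorProduct.dualDistrib_apply, TensorProduct.lift.tmul]
    | add s t hs ht =>
      simp only [map_add, LinearMap.add_apply, hs, ht]
  have hzero : TensorProduct.dualDistrib F ↥V ↥W (TensorProduct.map m1 m2 w') = 0 := by
    refine TensorProduct.ext' fun u v => ?_
    rw [key u v w', hw0 (u : A) u.2 (v : A) v.2]
    simp
  have h1 : TensorProduct.map m1 m2 w' = 0 := hdd (by rw [hzero, map_zero])
  have hw'0 : w' = 0 := hmap (by rw [h1, map_zero])
  rw [hw'0, map_zero]

end Aux

/-- Let `Γ` be a commutative additive monoid with bounded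
decompositions and `A` a unital `F`-algebra and `F`-coalgebra with `Δ(1) = 1 ⊗ 1`,
graded by `Γ` with `A_0 = F·1`, `A_α · A_β ⊆ A_{α+β}`, `Δ` respecting the grading and
each `A_γ` finite-dimensional. If `β` is a compatible pairing with `β(A_γ, A_δ) = 0` for
`γ ≠ δ` and `β(x, x) ≠ 0` for `x ≠ 0`, then `A` is generated as a unital `F`-algebra by
its primitive elements. -/
theorem statement15 (F : Type*) [Field F]
    (Γ : Type*) [AddCommMonoid Γ] [DecidableEq Γ]
    -- `Γ` has bounded decompositions
    (hbdd : ∀ γ : Γ, γ ≠ 0 → ∃ h : ℕ, ∀ l : List Γ,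
      (∀ x ∈ l, x ≠ 0) → l.sum = γ → l.length ≤ h)
    (A : Type*) [Ring A] [Algebra F A] [Coalgebra F A]
    (hone : Coalgebra.comul (1 : A) = (1 : A) ⊗ₜ[F] (1 : A))
    (𝒜 : Γ → Submodule F A)
    (hinternal : DirectSum.IsInternal 𝒜)
    (h0 : 𝒜 0 = (1 : Submodule F A))
    (hgradedmul : ∀ α β : Γ, 𝒜 α * 𝒜 β ≤ 𝒜 (α + β))
    -- `Δ` respects the grading
    (hΔ : ∀ γ : Γ, ∀ x ∈ 𝒜 γ, Coalgebra.comul x ∈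
      ⨆ p : {p : Γ × Γ // p.1 + p.2 = γ},
        Submodule.map₂ (TensorProduct.mk F A A) (𝒜 (p : Γ × Γ).1) (𝒜 (p : Γ × Γ).2))
    (hfin : ∀ γ : Γ, FiniteDimensional F (𝒜 γ))
    (β : A →ₗ[F] A →ₗ[F] F)
    -- compatibility: `β(a·a', c) = Σ β(a, c₍₂₎)·β(a', c₍₁₎)`
    (hmul : ∀ a a' c : A, β (a * a') c =
      TensorProduct.lift ((LinearMap.mul F F).compl₁₂ (β a') (β a))
        (Coalgebra.comul c))
    -- `ε(c) = β(1, c)`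
    (hcounit : ∀ c : A, Coalgebra.counit c = β 1 c)
    -- orthogonality of distinct graded components
    (horth : ∀ γ δ : Γ, γ ≠ δ → ∀ x ∈ 𝒜 γ, ∀ y ∈ 𝒜 δ, β x y = 0)
    -- anisotropy
    (haniso : ∀ x : A, x ≠ 0 → β x x ≠ 0) :
    Algebra.adjoin F ((PrimSubmodule F A : Set A)) = ⊤ := by
  classical
  rcases subsingleton_or_nontrivial A with hA | hA
  · exact eq_top_iff.mpr fun x _ => by
      simpa [Subsingleton.elim x (0 : A)] using
        (Algebra.adjoin F ((PrimSubmodule F A : Set A))).zero_mem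
  -- basic facts about the grading and the counit
  have hone_mem : (1 : A) ∈ 𝒜 0 := by
    rw [h0]; exact Submodule.one_le.mp le_rfl
  have hepszero : ∀ δ : Γ, δ ≠ 0 → ∀ v ∈ 𝒜 δ, Coalgebra.counit (R := F) v = 0 := by
    intro δ hδ v hv
    rw [hcounit]
    exact horth 0 δ (fun h => hδ h.symm) 1 hone_mem v hv
  have hε1 : Coalgebra.counit (R := F) (1 : A) = 1 := by
    have h := Coalgebra.lTensor_counit_comul (R := F) (1 : A)
    rw [hone, LinearMap.lTensor_tmul] at h
    have h2 : Coalgebra.counit (R := F) (1 : A) • (1 : A) = (1 : F) • (1 : A) := by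
      simpa [TensorProduct.rid_tmul] using congrArg (TensorProduct.rid F A) h
    exact (algebraMap F A).injective
      (by simpa [Algebra.algebraMap_eq_smul_one] using h2)
  -- the primitivity criterion
  have hprim : ∀ γ : Γ, γ ≠ 0 → ∀ x ∈ 𝒜 γ,
      (∀ σ τ : Γ, σ ≠ 0 → τ ≠ 0 → σ + τ = γ → ∀ a ∈ 𝒜 σ, ∀ a' ∈ 𝒜 τ,
        β (a * a') x = 0) →
      x ∈ PrimSubmodule F A := by
    intro γ hγ x hx horthx
    obtain ⟨f, hfmem, hfsum⟩ :=
      (Submodule.mem_iSup_iff_exists_finsupp _ _).mp (hΔ γ x hx)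
    let p10 : {p : Γ × Γ // p.1 + p.2 = γ} := ⟨(γ, 0), add_zero γ⟩
    let p01 : {p : Γ × Γ // p.1 + p.2 = γ} := ⟨(0, γ), zero_add γ⟩
    have hsingleA : ∀ (g : (A ⊗[F] A) →ₗ[F] A) (p₀ : {p : Γ × Γ // p.1 + p.2 = γ}),
        (∀ p : {p : Γ × Γ // p.1 + p.2 = γ}, p ≠ p₀ → g (f p) = 0) →
        g (Coalgebra.comul x) = g (f p₀) := by
      intro g p₀ hg
      rw [← hfsum, Finsupp.sum, map_sum]
      by_cases hmem : p₀ ∈ f.support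
      · exact Finset.sum_eq_single_of_mem p₀ hmem (fun p _ hne => hg p hne)
      · rw [Finset.sum_eq_zero (fun p hp => hg p (fun h => hmem (h ▸ hp))),
          Finsupp.notMem_support_iff.mp hmem, map_zero]
    have hsingleF : ∀ (g : (A ⊗[F] A) →ₗ[F] F) (p₀ : {p : Γ × Γ // p.1 + p.2 = γ}),
        (∀ p : {p : Γ × Γ // p.1 + p.2 = γ}, p ≠ p₀ → g (f p) = 0) →
        g (Coalgebra.comul x) = g (f p₀) := by
      intro g p₀ hg
      rw [← hfsum, Finsupp.sum, map_sum]
      by_cases hmem : p₀ ∈ f.support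
      · exact Finset.sum_eq_single_of_mem p₀ hmem (fun p _ hne => hg p hne)
      · rw [Finset.sum_eq_zero (fun p hp => hg p (fun h => hmem (h ▸ hp))),
          Finsupp.notMem_support_iff.mp hmem, map_zero]
    -- the (γ, 0) component of `comul x` is `x ⊗ₜ 1`
    have hstep10 : f p10 = x ⊗ₜ[F] (1 : A) := by
      set E : (A ⊗[F] A) →ₗ[F] A :=
        (TensorProduct.rid F A).toLinearMap ∘ₗ
          LinearMap.lTensor A (Coalgebra.counit (R := F) (A := A)) with hEdef
      have hEtmul : ∀ (u v : A), E (u ⊗ₜ[F] v) = Coalgebra.counit (R := F) v • u := by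
        intro u v
        simp [hEdef, LinearMap.lTensor_tmul, TensorProduct.rid_tmul]
      have hEcomul : E (Coalgebra.comul x) = x := by
        simp [hEdef, Coalgebra.lTensor_counit_comul, TensorProduct.rid_tmul]
      have hEzero : ∀ p : {p : Γ × Γ // p.1 + p.2 = γ}, p ≠ p10 → E (f p) = 0 := by
        intro p hp
        have h2 : (p : Γ × Γ).2 ≠ 0 := by
          intro h
          refine hp (Subtype.ext (Prod.ext ?_ h))
          have := p.2; rw [h, add_zero] at this; exact this
        have hker : Submodule.map₂ (TensorProduct.mk F A A)
            (𝒜 (p : Γ × Γ).1) (𝒜 (p : Γ × Γ).2) ≤ LinearMap.ker E := by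
          rw [Submodule.map₂_le]
          intro u hu v hv
          rw [LinearMap.mem_ker, TensorProduct.mk_apply, hEtmul,
            hepszero _ h2 v hv, zero_smul]
        exact LinearMap.mem_ker.mp (hker (hfmem p))
      have h10mem : f p10 ∈ Submodule.map ((TensorProduct.mk F A A).flip 1) (𝒜 γ) := by
        have hle : Submodule.map₂ (TensorProduct.mk F A A) (𝒜 γ) (𝒜 0)
            ≤ Submodule.map ((TensorProduct.mk F A A).flip 1) (𝒜 γ) := by
          rw [Submodule.map₂_le]
          intro u hu v hv
          rw [h0, Submodule.one_eq_span, Submodule.mem_span_singleton] at hv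
          obtain ⟨c, rfl⟩ := hv
          refine ⟨c • u, Submodule.smul_mem _ _ hu, ?_⟩
          simp [TensorProduct.mk_apply, TensorProduct.smul_tmul', TensorProduct.tmul_smul]
        exact hle (hfmem p10)
      obtain ⟨u, hu, huq⟩ := h10mem
      have huq' : u ⊗ₜ[F] (1 : A) = f p10 := by
        simpa [TensorProduct.mk_apply] using huq
      have hxu : x = u := by
        have h := hsingleA E p10 hEzero
        rw [hEcomul, ← huq', hEtmul, hε1, one_smul] at h
        exact h
      rw [← huq', ← hxu]
    -- the (0, γ) component of `comul x` is `1 ⊗ₜ x`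
    have hstep01 : f p01 = (1 : A) ⊗ₜ[F] x := by
      set E : (A ⊗[F] A) →ₗ[F] A :=
        (TensorProduct.lid F A).toLinearMap ∘ₗ
          LinearMap.rTensor A (Coalgebra.counit (R := F) (A := A)) with hEdef
      have hEtmul : ∀ (u v : A), E (u ⊗ₜ[F] v) = Coalgebra.counit (R := F) u • v := by
        intro u v
        simp [hEdef, LinearMap.rTensor_tmul, TensorProduct.lid_tmul]
      have hEcomul : E (Coalgebra.comul x) = x := by
        simp [hEdef, Coalgebra.rTensor_counit_comul, TensorProduct.lid_tmul]
      have hEzero : ∀ p : {p : Γ × Γ // p.1 + p.2 = γ}, p ≠ p01 → E (f p) = 0 := by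
        intro p hp
        have h1 : (p : Γ × Γ).1 ≠ 0 := by
          intro h
          refine hp (Subtype.ext (Prod.ext h ?_))
          have := p.2; rw [h, zero_add] at this; exact this
        have hker : Submodule.map₂ (TensorProduct.mk F A A)
            (𝒜 (p : Γ × Γ).1) (𝒜 (p : Γ × Γ).2) ≤ LinearMap.ker E := by
          rw [Submodule.map₂_le]
          intro u hu v hv
          rw [LinearMap.mem_ker, TensorProduct.mk_apply, hEtmul,
            hepszero _ h1 u hu, zero_smul]
        exact LinearMap.mem_ker.mp (hker (hfmem p))
      have h01mem : f p01 ∈ Submodule.map (TensorProduct.mk F A A 1) (𝒜 γ) := by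
        have hle : Submodule.map₂ (TensorProduct.mk F A A) (𝒜 0) (𝒜 γ)
            ≤ Submodule.map (TensorProduct.mk F A A 1) (𝒜 γ) := by
          rw [Submodule.map₂_le]
          intro u hu v hv
          rw [h0, Submodule.one_eq_span, Submodule.mem_span_singleton] at hu
          obtain ⟨c, rfl⟩ := hu
          refine ⟨c • v, Submodule.smul_mem _ _ hv, ?_⟩
          simp [TensorProduct.mk_apply, TensorProduct.smul_tmul', TensorProduct.tmul_smul]
        exact hle (hfmem p01)
      obtain ⟨u, hu, huq⟩ := h01mem
      have huq' : (1 : A) ⊗ₜ[F] u = f p01 := by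
        simpa [TensorProduct.mk_apply] using huq
      have hxu : x = u := by
        have h := hsingleA E p01 hEzero
        rw [hEcomul, ← huq', hEtmul, hε1, one_smul] at h
        exact h
      rw [← huq', ← hxu]
    -- all components with both degrees nonzero vanish
    have hstepC : ∀ p : {p : Γ × Γ // p.1 + p.2 = γ},
        (p : Γ × Γ).1 ≠ 0 → (p : Γ × Γ).2 ≠ 0 → f p = 0 := by
      intro p hσ hτ
      haveI := hfin (p : Γ × Γ).1
      haveI := hfin (p : Γ × Γ).2
      refine aux_tensor_nondeg β (𝒜 (p : Γ × Γ).1) (𝒜 (p : Γ × Γ).2)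
        (fun y _ hy => haniso y hy) (fun y _ hy => haniso y hy) (f p) (hfmem p) ?_
      intro a ha c hc
      set L := TensorProduct.lift ((LinearMap.mul F F).compl₁₂ (β a) (β c)) with hL
      have hLtmul : ∀ u v : A, L (u ⊗ₜ[F] v) = β a u * β c v := by
        intro u v
        simp [hL, TensorProduct.lift.tmul]
      have hLzero : ∀ q : {p : Γ × Γ // p.1 + p.2 = γ}, q ≠ p → L (f q) = 0 := by
        intro q hq
        have hne : (q : Γ × Γ).1 ≠ (p : Γ × Γ).1 ∨ (q : Γ × Γ).2 ≠ (p : Γ × Γ).2 := by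
          by_contra h
          push_neg at h
          exact hq (Subtype.ext (Prod.ext h.1 h.2))
        have hker : Submodule.map₂ (TensorProduct.mk F A A)
            (𝒜 (q : Γ × Γ).1) (𝒜 (q : Γ × Γ).2) ≤ LinearMap.ker L := by
          rw [Submodule.map₂_le]
          intro u hu v hv
          rw [LinearMap.mem_ker, TensorProduct.mk_apply, hLtmul]
          rcases hne with h | h
          · rw [horth _ _ (fun hh => h hh.symm) a ha u hu, zero_mul]
          · rw [horth _ _ (fun hh => h hh.symm) c hc v hv, mul_zero]
        exact LinearMap.mem_ker.mp (hker (hfmem q))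
      have hmain : β (c * a) x = L (Coalgebra.comul x) := hmul c a x
      have hva : β (c * a) x = 0 :=
        horthx (p : Γ × Γ).2 (p : Γ × Γ).1 hτ hσ (by rw [add_comm]; exact p.2) c hc a ha
      have := hsingleF L p hLzero
      rw [← hmain, hva] at this
      exact this.symm
    have hzero : ∀ p : {p : Γ × Γ // p.1 + p.2 = γ}, p ≠ p10 → p ≠ p01 → f p = 0 := by
      intro p hne10 hne01
      by_cases h1 : (p : Γ × Γ).1 = 0
      · exact absurd (Subtype.ext (Prod.ext h1 (by
          have := p.2; rw [h1, zero_add] at this; exact this))) hne01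
      · by_cases h2 : (p : Γ × Γ).2 = 0
        · exact absurd (Subtype.ext (Prod.ext (by
            have := p.2; rw [h2, add_zero] at this; exact this) h2)) hne10
        · exact hstepC p h1 h2
    have hne : p10 ≠ p01 := fun h => hγ (congrArg (fun q => (Subtype.val q).1) h)
    have hsupp : f.support ⊆ {p10, p01} := by
      intro p hp
      by_contra h
      simp only [Finset.mem_insert, Finset.mem_singleton, not_or] at h
      exact Finsupp.mem_support_iff.mp hp (hzero p h.1 h.2)
    have hfinal : Coalgebra.comul x = x ⊗ₜ[F] (1 : A) + (1 : A) ⊗ₜ[F] x := by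
      rw [← hfsum, Finsupp.sum,
        Finset.sum_subset hsupp (fun p _ hp => Finsupp.notMem_support_iff.mp hp),
        Finset.sum_pair hne, hstep10, hstep01]
    exact hfinal
  -- the length measure on `Γ`
  let S : Γ → Set ℕ := fun γ =>
    {n | ∀ l : List Γ, (∀ x ∈ l, x ≠ 0) → l.sum = γ → l.length ≤ n}
  let m : Γ → ℕ := fun γ => sInf (S γ)
  have hmS : ∀ γ : Γ, γ ≠ 0 → m γ ∈ S γ := fun γ hγ => Nat.sInf_mem (hbdd γ hγ)
  have hm1 : ∀ γ : Γ, γ ≠ 0 → 1 ≤ m γ := by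
    intro γ hγ
    have := hmS γ hγ [γ] (by simpa using hγ) (by simp)
    simpa using this
  have hmlt : ∀ γ α δ : Γ, γ ≠ 0 → α ≠ 0 → δ ≠ 0 → α + δ = γ → m α < m γ := by
    intro γ α δ hγ hα hδ hsum
    have hbound : m γ - 1 ∈ S α := by
      intro l hl hlsum
      have h2 := hmS γ hγ (l ++ [δ]) (by
        intro y hy
        rcases List.mem_append.mp hy with h | h
        · exact hl y h
        · rw [List.mem_singleton.mp h]; exact hδ)
        (by rw [List.sum_append, List.sum_singleton, hlsum, hsum])
      rw [List.length_append, List.length_singleton] at h2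
      omega
    have h3 : m α ≤ m γ - 1 := Nat.sInf_le hbound
    have h4 := hm1 γ hγ
    omega
  -- main induction
  set B := Algebra.adjoin F ((PrimSubmodule F A : Set A)) with hB
  have key : ∀ n : ℕ, ∀ γ : Γ, m γ ≤ n → ∀ x ∈ 𝒜 γ, x ∈ B := by
    intro n
    induction n using Nat.strong_induction_on with
    | _ n ih =>
      intro γ hγn x hx
      by_cases hγ : γ = 0
      · subst hγ
        rw [h0, Submodule.one_eq_range] at hx
        obtain ⟨c, rfl⟩ := hx
        simpa using B.algebraMap_mem c
      · -- the decomposable part of `𝒜 γ`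
        set D : Submodule F A :=
          ⨆ (p : Γ × Γ) (_ : p.1 + p.2 = γ ∧ p.1 ≠ 0 ∧ p.2 ≠ 0), 𝒜 p.1 * 𝒜 p.2 with hD
        have hDle : D ≤ 𝒜 γ := by
          refine iSup₂_le fun p hp => ?_
          have := hgradedmul p.1 p.2
          rwa [hp.1] at this
        have hDB : D ≤ Subalgebra.toSubmodule B := by
          refine iSup₂_le fun p hp => ?_
          rw [Submodule.mul_le]
          intro u hu v hv
          have hn1 : 1 ≤ n := le_trans (hm1 γ hγ) hγn
          have hu' : u ∈ B := ih (n - 1) (by omega) p.1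
            (by have := hmlt γ p.1 p.2 hγ hp.2.1 hp.2.2 hp.1; omega) u hu
          have hv' : v ∈ B := ih (n - 1) (by omega) p.2
            (by have := hmlt γ p.2 p.1 hγ hp.2.2 hp.2.1 (by rw [add_comm]; exact hp.1); omega)
            v hv
          exact B.mul_mem hu' hv'
        haveI := hfin γ
        obtain ⟨d, hd, hperp⟩ := aux_ortho β (𝒜 γ) D hDle
          (fun y _ hy => haniso y hy) x hx
        have hxd : x - d ∈ 𝒜 γ := sub_mem hx (hDle hd)
        have hp : (x - d) ∈ PrimSubmodule F A := by
          refine hprim γ hγ (x - d) hxd ?_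
          intro σ τ hσ hτ hst a ha a' ha'
          refine hperp (a * a') ?_
          have hmem : a * a' ∈ 𝒜 σ * 𝒜 τ := Submodule.mul_mem_mul ha ha'
          exact le_iSup₂ (f := fun (p : Γ × Γ) (_ : p.1 + p.2 = γ ∧ p.1 ≠ 0 ∧ p.2 ≠ 0) =>
            𝒜 p.1 * 𝒜 p.2) (σ, τ) ⟨hst, hσ, hτ⟩ hmem
        have hxeq : x = d + (x - d) := by abel
        rw [hxeq]
        exact B.add_mem (hDB hd) (Algebra.subset_adjoin hp)
  rw [eq_top_iff]
  intro x _
  have htop : (⊤ : Submodule F A) ≤ Subalgebra.toSubmodule B := by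
    rw [← hinternal.submodule_iSup_eq_top]
    exact iSup_le fun γ => fun y hy => key (m γ) γ le_rfl y hy
  exact htop Submodule.mem_top
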